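/- Let h(W¹,…,W^L, θ) = sqrt((max_ℓ g_ℓ(W^ℓ))² + λ·q(θ)²) for norms g_ℓ, q and λ > 0 (the MuonMax norm with λ = η_m/η_b). Then h is a norm and its dual norm is h_*(M¹,…,M^L, m) = sqrt((Σ_ℓ g_{ℓ,*}(M^ℓ))² + (1/λ)·q_*(m)²). -/

import Mathlib

section aux

lemma aux_sq_zero {x : ℝ} (h : x ^ 2 ≤ 0) : x = 0 :=
  pow_eq_zero_iff two_ne_zero |>.mp (le_antisymm h (sq_nonneg x))

variable {n : ℕ}

lemma aux_nonneg (f : (Fin n → ℝ) → ℝ)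
    (hsmul : ∀ (a : ℝ) x, f (a • x) = |a| * f x)
    (htri : ∀ x y, f (x + y) ≤ f x + f y) (x : Fin n → ℝ) : 0 ≤ f x := by
  have h0 : f 0 = 0 := by
    have := hsmul 0 x
    simpa using this
  have h1 : f (-x) = f x := by
    have := hsmul (-1) x
    simpa using this
  have := htri x (-x)
  simp [h0, h1] at this
  linarith

lemma aux_dual_nonneg (f : (Fin n → ℝ) → ℝ) (v : Fin n → ℝ)
    (hsmul : ∀ (a : ℝ) x, f (a • x) = |a| * f x) (fd : ℝ)
    (hfd : IsGreatest {r : ℝ | ∃ u : Fin n → ℝ, f u = 1 ∧ ∑ j, u j * v j = r} fd) :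
    0 ≤ fd := by
  obtain ⟨u, hu1, hu2⟩ := hfd.1
  have hneg : (-∑ j, u j * v j) ∈
      {r : ℝ | ∃ u : Fin n → ℝ, f u = 1 ∧ ∑ j, u j * v j = r} := by
    refine ⟨-u, ?_, ?_⟩
    · have := hsmul (-1) u
      simpa [hu1] using this
    · simp [neg_mul]
  have h2 := hfd.2 hneg
  linarith [hu2 ▸ h2]

lemma aux_dual_bound (f : (Fin n → ℝ) → ℝ) (v : Fin n → ℝ)
    (hzero : ∀ x, f x = 0 ↔ x = 0)
    (hsmul : ∀ (a : ℝ) x, f (a • x) = |a| * f x)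
    (htri : ∀ x y, f (x + y) ≤ f x + f y) (fd : ℝ)
    (hfd : IsGreatest {r : ℝ | ∃ u : Fin n → ℝ, f u = 1 ∧ ∑ j, u j * v j = r} fd)
    (u : Fin n → ℝ) : ∑ j, u j * v j ≤ f u * fd := by
  rcases eq_or_ne (f u) 0 with h | h
  · have hu0 : u = 0 := (hzero u).1 h
    subst hu0
    simp [h]
  · have hpos : 0 < f u := lt_of_le_of_ne (aux_nonneg f hsmul htri u) (Ne.symm h)
    have hmem : ((f u)⁻¹ * ∑ j, u j * v j) ∈
        {r : ℝ | ∃ w : Fin n → ℝ, f w = 1 ∧ ∑ j, w j * v j = r} := by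
      refine ⟨(f u)⁻¹ • u, ?_, ?_⟩
      · rw [hsmul]
        rw [abs_of_pos (inv_pos.2 hpos)]
        field_simp
      · rw [Finset.mul_sum]
        congr 1; ext j; simp [Pi.smul_apply]; ring
    have := hfd.2 hmem
    calc ∑ j, u j * v j = f u * ((f u)⁻¹ * ∑ j, u j * v j) := by field_simp
    _ ≤ f u * fd := by apply mul_le_mul_of_nonneg_left this (le_of_lt hpos)

lemma aux_cs (lam x y a b : ℝ) (hl : 0 < lam) (hx : 0 ≤ x) (hy : 0 ≤ y)
    (ha : 0 ≤ a) (hb : 0 ≤ b) :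
    x * a + y * b ≤ Real.sqrt (x ^ 2 + lam * y ^ 2) * Real.sqrt (a ^ 2 + (1 / lam) * b ^ 2) := by
  rw [← Real.sqrt_mul (by positivity)]
  rw [show x * a + y * b = Real.sqrt ((x * a + y * b) ^ 2) from
    (Real.sqrt_sq (by positivity)).symm]
  apply Real.sqrt_le_sqrt
  have key : lam * ((x * a + y * b) ^ 2)
      ≤ lam * ((x ^ 2 + lam * y ^ 2) * (a ^ 2 + (1 / lam) * b ^ 2)) := by
    have hl0 : lam ≠ 0 := ne_of_gt hl
    have e : lam * ((x ^ 2 + lam * y ^ 2) * (a ^ 2 + (1 / lam) * b ^ 2))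
        = (x ^ 2 + lam * y ^ 2) * (lam * a ^ 2 + b ^ 2) := by
      have : lam * (1 / lam) = 1 := by field_simp
      linear_combination (x ^ 2 + lam * y ^ 2) * b ^ 2 * this
    rw [e]
    nlinarith [sq_nonneg (x * b - lam * y * a)]
  exact (mul_le_mul_iff_right₀ hl).mp key

lemma aux_mink (lam A B A' B' : ℝ) (hl : 0 < lam) (hA : 0 ≤ A) (hB : 0 ≤ B)
    (hA' : 0 ≤ A') (hB' : 0 ≤ B') :
    Real.sqrt ((A + A') ^ 2 + lam * (B + B') ^ 2)
      ≤ Real.sqrt (A ^ 2 + lam * B ^ 2) + Real.sqrt (A' ^ 2 + lam * B' ^ 2) := by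
  have h1 : A * A' + lam * (B * B') ≤
      Real.sqrt (A ^ 2 + lam * B ^ 2) * Real.sqrt (A' ^ 2 + lam * B' ^ 2) := by
    rw [← Real.sqrt_mul (by positivity)]
    rw [show A * A' + lam * (B * B') = Real.sqrt ((A * A' + lam * (B * B')) ^ 2) from
      (Real.sqrt_sq (by positivity)).symm]
    apply Real.sqrt_le_sqrt
    nlinarith [sq_nonneg (A * B' - A' * B), hl.le]
  have s1 : Real.sqrt (A ^ 2 + lam * B ^ 2) ^ 2 = A ^ 2 + lam * B ^ 2 :=
    Real.sq_sqrt (by positivity)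
  have s2 : Real.sqrt (A' ^ 2 + lam * B' ^ 2) ^ 2 = A' ^ 2 + lam * B' ^ 2 :=
    Real.sq_sqrt (by positivity)
  have hnn1 : 0 ≤ Real.sqrt (A ^ 2 + lam * B ^ 2) := Real.sqrt_nonneg _
  have hnn2 : 0 ≤ Real.sqrt (A' ^ 2 + lam * B' ^ 2) := Real.sqrt_nonneg _
  rw [show (A + A') ^ 2 + lam * (B + B') ^ 2
      = (A ^ 2 + lam * B ^ 2) + (A' ^ 2 + lam * B' ^ 2) + 2 * (A * A' + lam * (B * B'))
      by ring]
  calc Real.sqrt _ ≤ Real.sqrt ((Real.sqrt (A ^ 2 + lam * B ^ 2)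
        + Real.sqrt (A' ^ 2 + lam * B' ^ 2)) ^ 2) := by
        apply Real.sqrt_le_sqrt; nlinarith
    _ = _ := Real.sqrt_sq (by positivity)

end aux

/-- The MuonMax norm `h(W,θ) = sqrt((max_ℓ g_ℓ(W^ℓ))² + λ q(θ)²)` is a norm and
its dual is `h_*(M, m) = sqrt((Σ_ℓ g_{ℓ,*}(M^ℓ))² + (1/λ) q_*(m)²)`. -/
theorem stmt_18 {L p : ℕ} [NeZero L] (d : Fin L → ℕ)
    (g : ∀ ℓ : Fin L, (Fin (d ℓ) → ℝ) → ℝ)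
    (hg : ∀ ℓ, (∀ x, g ℓ x = 0 ↔ x = 0) ∧
      (∀ (a : ℝ) x, g ℓ (a • x) = |a| * g ℓ x) ∧
      (∀ x y, g ℓ (x + y) ≤ g ℓ x + g ℓ y))
    (q : (Fin p → ℝ) → ℝ)
    (hq : (∀ x, q x = 0 ↔ x = 0) ∧ (∀ (a : ℝ) x, q (a • x) = |a| * q x) ∧
      (∀ x y, q (x + y) ≤ q x + q y))
    (lam : ℝ) (hlam : 0 < lam)
    (M : ∀ ℓ : Fin L, Fin (d ℓ) → ℝ) (m : Fin p → ℝ)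
    (gd : Fin L → ℝ)
    (hgd : ∀ ℓ, IsGreatest
      {r : ℝ | ∃ u : Fin (d ℓ) → ℝ, g ℓ u = 1 ∧ ∑ j, u j * M ℓ j = r} (gd ℓ))
    (qd : ℝ)
    (hqd : IsGreatest {r : ℝ | ∃ u : Fin p → ℝ, q u = 1 ∧ ∑ j, u j * m j = r} qd) :
    let h : (∀ ℓ : Fin L, Fin (d ℓ) → ℝ) × (Fin p → ℝ) → ℝ := fun P =>
      Real.sqrt ((Finset.univ.sup' Finset.univ_nonempty
        (fun ℓ => g ℓ (P.1 ℓ))) ^ 2 + lam * (q P.2) ^ 2)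
    ((∀ P, h P = 0 ↔ P = 0) ∧ (∀ (a : ℝ) P, h (a • P) = |a| * h P) ∧
        (∀ P Q, h (P + Q) ≤ h P + h Q)) ∧
      IsGreatest
        {r : ℝ | ∃ P : (∀ ℓ : Fin L, Fin (d ℓ) → ℝ) × (Fin p → ℝ),
          h P = 1 ∧ (∑ ℓ, ∑ j, P.1 ℓ j * M ℓ j) + ∑ j, P.2 j * m j = r}
        (Real.sqrt ((∑ ℓ, gd ℓ) ^ 2 + (1 / lam) * qd ^ 2)) := by
  intro h
  have gnn : ∀ ℓ x, 0 ≤ g ℓ x := fun ℓ => aux_nonneg _ (hg ℓ).2.1 (hg ℓ).2.2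
  have qnn : ∀ x, 0 ≤ q x := aux_nonneg _ hq.2.1 hq.2.2
  have gdnn : ∀ ℓ, 0 ≤ gd ℓ := fun ℓ => aux_dual_nonneg _ _ (hg ℓ).2.1 _ (hgd ℓ)
  have qdnn : 0 ≤ qd := aux_dual_nonneg _ _ hq.2.1 _ hqd
  -- sup' properties
  have supnn : ∀ P : (∀ ℓ : Fin L, Fin (d ℓ) → ℝ) × (Fin p → ℝ),
      0 ≤ Finset.univ.sup' Finset.univ_nonempty (fun ℓ => g ℓ (P.1 ℓ)) := by
    intro P
    obtain ⟨ℓ, -, hℓ⟩ := Finset.exists_mem_eq_sup' Finset.univ_nonempty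
      (fun ℓ => g ℓ (P.1 ℓ))
    rw [hℓ]; exact gnn _ _
  have hargnn : ∀ P : (∀ ℓ : Fin L, Fin (d ℓ) → ℝ) × (Fin p → ℝ),
      0 ≤ (Finset.univ.sup' Finset.univ_nonempty (fun ℓ => g ℓ (P.1 ℓ))) ^ 2
        + lam * (q P.2) ^ 2 := by
    intro P; positivity
  constructor
  · refine ⟨?_, ?_, ?_⟩
    · -- h P = 0 ↔ P = 0
      intro P
      rw [show h P = Real.sqrt _ from rfl, Real.sqrt_eq_zero (hargnn P)]
      constructor
      · intro h0
        have hs1 : (Finset.univ.sup' Finset.univ_nonempty (fun ℓ => g ℓ (P.1 ℓ))) ^ 2 ≤ 0 := by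
          nlinarith [mul_nonneg hlam.le (sq_nonneg (q P.2))]
        have hsup : Finset.univ.sup' Finset.univ_nonempty (fun ℓ => g ℓ (P.1 ℓ)) = 0 :=
          aux_sq_zero hs1
        have hq1 : lam * (q P.2) ^ 2 ≤ lam * 0 := by
          nlinarith [sq_nonneg (Finset.univ.sup' Finset.univ_nonempty (fun ℓ => g ℓ (P.1 ℓ)))]
        have hqz : q P.2 = 0 := aux_sq_zero ((mul_le_mul_iff_right₀ hlam).mp hq1)
        have h1 : P.1 = 0 := by
          funext ℓ
          have : g ℓ (P.1 ℓ) ≤ 0 := hsup ▸ Finset.le_sup' (fun ℓ => g ℓ (P.1 ℓ))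
            (Finset.mem_univ ℓ)
          have := le_antisymm this (gnn ℓ _)
          exact ((hg ℓ).1 _).1 this
        have h2 : P.2 = 0 := (hq.1 _).1 hqz
        exact Prod.ext h1 h2
      · intro h0
        subst h0
        have : ∀ ℓ : Fin L, g ℓ ((0 : (∀ ℓ : Fin L, Fin (d ℓ) → ℝ) ×
            (Fin p → ℝ)).1 ℓ) = 0 := fun ℓ => ((hg ℓ).1 _).2 rfl
        have hq0 : q ((0 : (∀ ℓ : Fin L, Fin (d ℓ) → ℝ) × (Fin p → ℝ)).2) = 0 :=
          (hq.1 _).2 rfl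
        rw [hq0]
        have hsup0 : Finset.univ.sup' Finset.univ_nonempty
            (fun ℓ => g ℓ ((0 : (∀ ℓ : Fin L, Fin (d ℓ) → ℝ) × (Fin p → ℝ)).1 ℓ)) = 0 := by
          apply le_antisymm
          · exact Finset.sup'_le _ _ fun ℓ _ => (this ℓ).le
          · obtain ⟨ℓ, -, hℓ⟩ := Finset.exists_mem_eq_sup' Finset.univ_nonempty
              (fun ℓ => g ℓ ((0 : (∀ ℓ : Fin L, Fin (d ℓ) → ℝ) × (Fin p → ℝ)).1 ℓ))
            rw [hℓ, this ℓ]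
        rw [hsup0]; ring
    · -- homogeneity
      intro a P
      have hsm : ∀ ℓ, g ℓ ((a • P).1 ℓ) = |a| * g ℓ (P.1 ℓ) := by
        intro ℓ
        have : (a • P).1 ℓ = a • (P.1 ℓ) := rfl
        rw [this, (hg ℓ).2.1]
      have hqa : q ((a • P).2) = |a| * q P.2 := by
        have : (a • P).2 = a • P.2 := rfl
        rw [this, hq.2.1]
      have hsup : Finset.univ.sup' Finset.univ_nonempty (fun ℓ => g ℓ ((a • P).1 ℓ))
          = |a| * Finset.univ.sup' Finset.univ_nonempty (fun ℓ => g ℓ (P.1 ℓ)) := by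
        apply le_antisymm
        · apply Finset.sup'_le
          intro ℓ _
          rw [hsm ℓ]
          exact mul_le_mul_of_nonneg_left
            (Finset.le_sup' (fun ℓ => g ℓ (P.1 ℓ)) (Finset.mem_univ ℓ)) (abs_nonneg a)
        · obtain ⟨ℓ, -, hℓ⟩ := Finset.exists_mem_eq_sup' Finset.univ_nonempty
            (fun ℓ => g ℓ (P.1 ℓ))
          rw [hℓ, ← hsm ℓ]
          exact Finset.le_sup' (fun ℓ => g ℓ ((a • P).1 ℓ)) (Finset.mem_univ ℓ)
      show Real.sqrt _ = |a| * Real.sqrt _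
      rw [hsup, hqa]
      rw [show (|a| * Finset.univ.sup' Finset.univ_nonempty (fun ℓ => g ℓ (P.1 ℓ))) ^ 2
          + lam * (|a| * q P.2) ^ 2
          = a ^ 2 * ((Finset.univ.sup' Finset.univ_nonempty (fun ℓ => g ℓ (P.1 ℓ))) ^ 2
            + lam * (q P.2) ^ 2) by rw [mul_pow, mul_pow, sq_abs]; ring]
      rw [Real.sqrt_mul (sq_nonneg a), Real.sqrt_sq_eq_abs]
    · -- triangle
      intro P Q
      have hA : Finset.univ.sup' Finset.univ_nonempty (fun ℓ => g ℓ ((P + Q).1 ℓ))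
          ≤ Finset.univ.sup' Finset.univ_nonempty (fun ℓ => g ℓ (P.1 ℓ))
            + Finset.univ.sup' Finset.univ_nonempty (fun ℓ => g ℓ (Q.1 ℓ)) := by
        apply Finset.sup'_le
        intro ℓ _
        have : (P + Q).1 ℓ = P.1 ℓ + Q.1 ℓ := rfl
        rw [this]
        exact le_trans ((hg ℓ).2.2 _ _) (add_le_add
          (Finset.le_sup' (fun ℓ => g ℓ (P.1 ℓ)) (Finset.mem_univ ℓ))
          (Finset.le_sup' (fun ℓ => g ℓ (Q.1 ℓ)) (Finset.mem_univ ℓ)))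
      have hB : q ((P + Q).2) ≤ q P.2 + q Q.2 := hq.2.2 _ _
      calc h (P + Q) ≤ Real.sqrt ((Finset.univ.sup' Finset.univ_nonempty
            (fun ℓ => g ℓ (P.1 ℓ)) + Finset.univ.sup' Finset.univ_nonempty
            (fun ℓ => g ℓ (Q.1 ℓ))) ^ 2 + lam * (q P.2 + q Q.2) ^ 2) := by
            apply Real.sqrt_le_sqrt
            have h1 : 0 ≤ q ((P+Q).2) := qnn _
            have h2 : 0 ≤ Finset.univ.sup' Finset.univ_nonempty
              (fun ℓ => g ℓ ((P+Q).1 ℓ)) := supnn (P+Q)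
            apply add_le_add
            · exact pow_le_pow_left₀ h2 hA 2
            · exact mul_le_mul_of_nonneg_left (pow_le_pow_left₀ h1 hB 2) hlam.le
        _ ≤ h P + h Q := aux_mink lam _ _ _ _ hlam (supnn P) (qnn P.2) (supnn Q) (qnn Q.2)
  · -- dual norm
    set S := ∑ ℓ, gd ℓ with hS
    have hSnn : 0 ≤ S := Finset.sum_nonneg fun ℓ _ => gdnn ℓ
    set D := Real.sqrt (S ^ 2 + (1 / lam) * qd ^ 2) with hD
    have hDnn : 0 ≤ D := Real.sqrt_nonneg _
    have hDsq : D ^ 2 = S ^ 2 + (1 / lam) * qd ^ 2 := Real.sq_sqrt (by positivity)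
    constructor
    · -- membership: attainment
      choose u hu1 hu2 using fun ℓ => (hgd ℓ).1
      obtain ⟨v, hv1, hv2⟩ := hqd.1
      rcases eq_or_lt_of_le hDnn with hD0 | hDpos
      · -- D = 0: S = 0 and qd = 0
        have harg : S ^ 2 + (1 / lam) * qd ^ 2 = 0 := by
          rw [← hDsq, ← hD0]; ring
        have hlinv : (0:ℝ) < 1 / lam := by positivity
        have hS0 : S = 0 := aux_sq_zero (by nlinarith [mul_nonneg hlinv.le (sq_nonneg qd)])
        have hqd0 : qd = 0 := aux_sq_zero ((mul_le_mul_iff_right₀ hlinv).mp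
          (by nlinarith [sq_nonneg S] : (1 / lam) * qd ^ 2 ≤ (1 / lam) * 0))
        refine ⟨(u, 0), ?_, ?_⟩
        · show Real.sqrt _ = 1
          rw [Real.sqrt_eq_one]
          have hsup1 : Finset.univ.sup' Finset.univ_nonempty (fun ℓ => g ℓ (u ℓ)) = 1 := by
            apply le_antisymm
            · exact Finset.sup'_le _ _ fun ℓ _ => (hu1 ℓ).le
            · obtain ⟨ℓ, -, hℓ⟩ := Finset.exists_mem_eq_sup' Finset.univ_nonempty
                (fun ℓ => g ℓ (u ℓ))
              rw [hℓ, hu1 ℓ]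
          have hq0 : q (0 : Fin p → ℝ) = 0 := (hq.1 _).2 rfl
          simp only [hsup1, hq0]
          ring
        · rw [← hD0]
          simp only []
          have : ∑ ℓ, ∑ j, u ℓ j * M ℓ j = S := by
            rw [hS]; exact Finset.sum_congr rfl fun ℓ _ => hu2 ℓ
          simp [this, hS0]
      · -- D > 0
        refine ⟨(fun ℓ => (S / D) • u ℓ, (qd / (lam * D)) • v), ?_, ?_⟩
        · show Real.sqrt _ = 1
          rw [Real.sqrt_eq_one]
          have hgℓ : ∀ ℓ, g ℓ ((S / D) • u ℓ) = S / D := by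
            intro ℓ
            rw [(hg ℓ).2.1, hu1 ℓ, abs_of_nonneg (by positivity)]
            ring
          have hsup1 : Finset.univ.sup' Finset.univ_nonempty
              (fun ℓ => g ℓ ((S / D) • u ℓ)) = S / D := by
            apply le_antisymm
            · exact Finset.sup'_le _ _ fun ℓ _ => (hgℓ ℓ).le
            · obtain ⟨ℓ, -, hℓ⟩ := Finset.exists_mem_eq_sup' Finset.univ_nonempty
                (fun ℓ => g ℓ ((S / D) • u ℓ))
              rw [hℓ, hgℓ ℓ]
          have hqv : q ((qd / (lam * D)) • v) = qd / (lam * D) := by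
            rw [hq.2.1, hv1, abs_of_nonneg (by positivity)]
            ring
          have hDsq' : lam * D ^ 2 = lam * S ^ 2 + qd ^ 2 := by
            rw [hDsq]; field_simp
          simp only [hsup1, hqv]
          rw [div_pow, div_pow]
          field_simp
          linear_combination (-1 : ℝ) * hDsq'
        · simp only []
          have e1 : ∀ ℓ, ∑ j, ((S / D) • u ℓ) j * M ℓ j = (S / D) * gd ℓ := by
            intro ℓ
            rw [← hu2 ℓ, Finset.mul_sum]
            exact Finset.sum_congr rfl fun j _ => by simp [Pi.smul_apply]; ring
          have e2 : ∑ j, ((qd / (lam * D)) • v) j * m j = (qd / (lam * D)) * qd := by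
            rw [← hv2, Finset.mul_sum]
            exact Finset.sum_congr rfl fun j _ => by simp [Pi.smul_apply]; ring
          rw [e2]
          rw [show ∑ ℓ, ∑ j, ((fun ℓ => (S / D) • u ℓ) ℓ) j * M ℓ j
              = (S / D) * S by
            rw [hS, Finset.mul_sum]; exact Finset.sum_congr rfl fun ℓ _ => e1 ℓ]
          have hDsq' : lam * D ^ 2 = lam * S ^ 2 + qd ^ 2 := by
            rw [hDsq]; field_simp
          field_simp
          linear_combination (-1 : ℝ) * hDsq'
    · -- upper bound
      rintro r ⟨P, hP1, hP2⟩
      set A := Finset.univ.sup' Finset.univ_nonempty (fun ℓ => g ℓ (P.1 ℓ)) with hA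
      have hAnn : 0 ≤ A := supnn P
      have hunit : A ^ 2 + lam * (q P.2) ^ 2 = 1 := by
        have := hP1
        rw [show h P = Real.sqrt (A ^ 2 + lam * (q P.2) ^ 2) from rfl,
          Real.sqrt_eq_one] at this
        exact this
      have step1 : ∑ ℓ, ∑ j, P.1 ℓ j * M ℓ j ≤ A * S := by
        rw [hS, Finset.mul_sum]
        apply Finset.sum_le_sum
        intro ℓ _
        calc ∑ j, P.1 ℓ j * M ℓ j ≤ g ℓ (P.1 ℓ) * gd ℓ :=
              aux_dual_bound _ _ (hg ℓ).1 (hg ℓ).2.1 (hg ℓ).2.2 _ (hgd ℓ) _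
          _ ≤ A * gd ℓ := mul_le_mul_of_nonneg_right
              (Finset.le_sup' (fun ℓ => g ℓ (P.1 ℓ)) (Finset.mem_univ ℓ)) (gdnn ℓ)
      have step2 : ∑ j, P.2 j * m j ≤ q P.2 * qd :=
        aux_dual_bound _ _ hq.1 hq.2.1 hq.2.2 _ hqd _
      have step3 : A * S + q P.2 * qd ≤ Real.sqrt (A ^ 2 + lam * (q P.2) ^ 2) * D :=
        aux_cs lam A (q P.2) S qd hlam hAnn (qnn P.2) hSnn qdnn
      rw [← hP2]
      calc (∑ ℓ, ∑ j, P.1 ℓ j * M ℓ j) + ∑ j, P.2 j * m j ≤ A * S + q P.2 * qd :=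
            add_le_add step1 step2
        _ ≤ Real.sqrt (A ^ 2 + lam * (q P.2) ^ 2) * D := step3
        _ = D := by rw [hunit, Real.sqrt_one, one_mul]
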